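/- Let n ≥ 1, α ∈ ℝ, and let f : ℝⁿ → ℝ be locally integrable with finite Campanato norm ‖f‖_{E^{α,1}}. Let B = B(x₀,r) be a ball, x ∈ B, and t > 8r. Then ∫_{{y : 8r ≤ |x−y| < t}} r |f(y) − f_B| / |x−y|^{n} dy is at most c r^{1+α} log(t/r) ‖f‖_{E^{α,1}} if α < 0, at most c r (log(t/r))² ‖f‖_{E^{α,1}} if α = 0, and at most c r t^{α} log(t/r) ‖f‖_{E^{α,1}} if α > 0, with c depending only on n and α. -/

import Mathlib

open MeasureTheory Metric ENNReal

noncomputable def ballAvg (n : ℕ) (f : EuclideanSpace ℝ (Fin n) → ℝ)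
    (c : EuclideanSpace ℝ (Fin n)) (r : ℝ) : ℝ :=
  (volume (closedBall c r)).toReal⁻¹ * ∫ y in closedBall c r, f y

noncomputable def bmoNorm (n : ℕ) (f : EuclideanSpace ℝ (Fin n) → ℝ) : ℝ≥0∞ :=
  ⨆ (c : EuclideanSpace ℝ (Fin n)) (r : ℝ) (_ : 0 < r),
    ENNReal.ofReal ((volume (closedBall c r)).toReal⁻¹ *
      ∫ y in closedBall c r, |f y - ballAvg n f c r|)

noncomputable def campanatoNorm (n : ℕ) (α p : ℝ) (f : EuclideanSpace ℝ (Fin n) → ℝ) : ℝ≥0∞ :=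
  ⨆ (c : EuclideanSpace ℝ (Fin n)) (r : ℝ) (_ : 0 < r),
    ENNReal.ofReal ((volume (closedBall c r)).toReal ^ (-(α / n)) *
      ((volume (closedBall c r)).toReal⁻¹ *
        ∫ y in closedBall c r, |f y - ballAvg n f c r| ^ p) ^ (1 / p))

noncomputable def campanato1Norm (n : ℕ) (α : ℝ) (f : EuclideanSpace ℝ (Fin n) → ℝ) : ℝ≥0∞ :=
  ⨆ (c : EuclideanSpace ℝ (Fin n)) (r : ℝ) (_ : 0 < r),
    ENNReal.ofReal ((volume (closedBall c r)).toReal ^ (-(α / n)) *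
      ((volume (closedBall c r)).toReal⁻¹ *
        ∫ y in closedBall c r, |f y - ballAvg n f c r|))

noncomputable def lipNorm (n : ℕ) (γ : ℝ) (f : EuclideanSpace ℝ (Fin n) → ℝ) : ℝ≥0∞ :=
  ⨆ (x : EuclideanSpace ℝ (Fin n)) (y : EuclideanSpace ℝ (Fin n)) (_ : x ≠ y),
    ENNReal.ofReal (|f x - f y| / ‖x - y‖ ^ γ)

set_option maxHeartbeats 1000000

noncomputable def uvol (n : ℕ) : ℝ :=
  (volume (ball (0 : EuclideanSpace ℝ (Fin n)) 1)).toReal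

section AuxGeom

lemma gsum_lt_one {c : ℝ} (h0 : 0 ≤ c) (h1 : c < 1) (m : ℕ) :
    ∑ j ∈ Finset.range m, c ^ (j + 1) ≤ (1 - c)⁻¹ := by
  have h2 : ∑ j ∈ Finset.range m, c ^ (j+1) = c * ∑ j ∈ Finset.range m, c ^ j := by
    rw [Finset.mul_sum]; exact Finset.sum_congr rfl fun j _ => by ring
  have h3 : ∑ j ∈ Finset.range m, c ^ j = (c ^ m - 1) / (c - 1) := geom_sum_eq h1.ne m
  have hc : 0 < 1 - c := by linarith
  have hcm : 0 ≤ c ^ m := by positivity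
  have hcm1 : c ^ m ≤ 1 := pow_le_one₀ h0 h1.le
  rw [h2, h3]
  have hceq : c * ((c ^ m - 1) / (c - 1)) = c * (1 - c ^ m) / (1 - c) := by
    rw [mul_div_assoc]
    congr 1
    rw [div_eq_div_iff (by linarith) (by linarith)]
    ring
  rw [hceq, div_le_iff₀ hc, inv_mul_cancel₀ hc.ne']
  nlinarith [mul_nonneg h0 hcm]


lemma gsum_gt_one {c : ℝ} (h1 : 1 < c) (m : ℕ) :
    ∑ j ∈ Finset.range m, c ^ (j + 1) ≤ c ^ m * (c / (c - 1)) := by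
  have hc : (0:ℝ) < c - 1 := by linarith
  induction m with
  | zero => simp; positivity
  | succ m ih =>
    rw [Finset.sum_range_succ]
    have key : c ^ (m+1) * (c / (c-1)) = c ^ m * (c / (c-1)) + c ^ (m+1) := by
      field_simp; ring
    rw [key]
    exact add_le_add_left ih _


lemma two_pow_rpow (α : ℝ) (j : ℕ) : ((2:ℝ) ^ j) ^ α = ((2:ℝ) ^ α) ^ j := by
  rw [← Real.rpow_natCast ((2:ℝ) ^ α) j, ← Real.rpow_natCast (2:ℝ) j,
    ← Real.rpow_mul (by norm_num), ← Real.rpow_mul (by norm_num), mul_comm]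


lemma pow_rpow_div {n : ℕ} (hn : n ≠ 0) {ρ w α : ℝ} (hρ : 0 < ρ) (hw : 0 ≤ w) :
    (ρ ^ n * w) ^ (α / n) = ρ ^ α * w ^ (α / n) := by
  rw [Real.mul_rpow (by positivity) hw, ← Real.rpow_natCast ρ n, ← Real.rpow_mul hρ.le]
  congr 2
  field_simp


lemma lintegral_finset_biUnion_le {X : Type*} [MeasurableSpace X] (μ : Measure X)
    (g : X → ℝ≥0∞) (s : Finset ℕ) (A : ℕ → Set X) :
    ∫⁻ y in ⋃ k ∈ s, A k, g y ∂μ ≤ ∑ k ∈ s, ∫⁻ y in A k, g y ∂μ := by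
  classical
  induction s using Finset.induction with
  | empty => simp
  | insert a s h ih =>
    rw [Finset.set_biUnion_insert, Finset.sum_insert h]
    exact le_trans (lintegral_union_le _ _ _) (add_le_add_right ih _)


end AuxGeom

section AuxHelpers
open Finset
variable {n : ℕ} {α : ℝ} {f : EuclideanSpace ℝ (Fin n) → ℝ}

lemma vol_pos (c : EuclideanSpace ℝ (Fin n)) {ρ : ℝ} (hρ : 0 < ρ) :
    0 < (volume (closedBall c ρ)).toReal :=
  ENNReal.toReal_pos (measure_closedBall_pos volume c hρ).ne' measure_closedBall_lt_top.ne


lemma vol_eq (c : EuclideanSpace ℝ (Fin n)) {ρ : ℝ} (hρ : 0 ≤ ρ) :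
    (volume (closedBall c ρ)).toReal = ρ ^ n * uvol n := by
  unfold uvol
  rw [Measure.addHaar_closedBall volume c hρ, ENNReal.toReal_mul,
    ENNReal.toReal_ofReal (by positivity), finrank_euclideanSpace_fin]


lemma camp_int_le (hM : campanato1Norm n α f < ⊤) (c : EuclideanSpace ℝ (Fin n)) {ρ : ℝ}
    (hρ : 0 < ρ) :
    ∫ y in closedBall c ρ, |f y - ballAvg n f c ρ| ≤
      (volume (closedBall c ρ)).toReal ^ (α / n) * (volume (closedBall c ρ)).toReal *
        (campanato1Norm n α f).toReal := by
  set V := (volume (closedBall c ρ)).toReal with hVdef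
  set I := ∫ y in closedBall c ρ, |f y - ballAvg n f c ρ| with hIdef
  have hVpos : 0 < V := vol_pos c hρ
  have hI0 : 0 ≤ I := integral_nonneg fun y => abs_nonneg _
  have h1 : ENNReal.ofReal (V ^ (-(α / n)) * (V⁻¹ * I)) ≤ campanato1Norm n α f :=
    le_iSup_of_le c (le_iSup_of_le ρ (le_iSup_of_le hρ le_rfl))
  have h2 : V ^ (-(α / n)) * (V⁻¹ * I) ≤ (campanato1Norm n α f).toReal := by
    have h3 := ENNReal.toReal_mono hM.ne h1
    rwa [ENNReal.toReal_ofReal (by positivity)] at h3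
  have hrp : 0 < V ^ (α / n) := Real.rpow_pos_of_pos hVpos _
  have key : I = (V ^ (α / n) * V) * (V ^ (-(α / n)) * (V⁻¹ * I)) := by
    rw [Real.rpow_neg hVpos.le]
    field_simp
  calc I = (V ^ (α / n) * V) * (V ^ (-(α / n)) * (V⁻¹ * I)) := key
    _ ≤ (V ^ (α / n) * V) * (campanato1Norm n α f).toReal := by
        exact mul_le_mul_of_nonneg_left h2 (by positivity)


lemma avg_sub_le (hf : LocallyIntegrable f volume) (c : EuclideanSpace ℝ (Fin n)) {ρ : ℝ}
    (hρ : 0 < ρ) (a : ℝ) :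
    |ballAvg n f c ρ - a| ≤
      (volume (closedBall c ρ)).toReal⁻¹ * ∫ y in closedBall c ρ, |f y - a| := by
  set V := (volume (closedBall c ρ)).toReal with hVdef
  have hVpos : 0 < V := vol_pos c hρ
  have hfi : IntegrableOn f (closedBall c ρ) volume :=
    hf.integrableOn_isCompact (isCompact_closedBall c ρ)
  have h1 : ballAvg n f c ρ - a = V⁻¹ * ∫ y in closedBall c ρ, (f y - a) := by
    rw [integral_sub hfi (integrableOn_const measure_closedBall_lt_top.ne)]
    rw [setIntegral_const, measureReal_def]
    rw [ballAvg]
    field_simp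
    try ring
    rw [← hVdef, inv_mul_cancel_right₀ hVpos.ne']; ring
  rw [h1, abs_mul, abs_of_nonneg (by positivity : (0:ℝ) ≤ V⁻¹)]
  gcongr
  calc |∫ y in closedBall c ρ, (f y - a)| ≤ ∫ y in closedBall c ρ, |f y - a| := by
        simpa [Real.norm_eq_abs] using
          norm_integral_le_integral_norm (μ := volume.restrict (closedBall c ρ))
            (f := fun y => f y - a)
  _ ≤ _ := le_rfl


lemma uvol_pos : 0 < uvol n :=
  ENNReal.toReal_pos (measure_ball_pos volume _ one_pos).ne' measure_ball_lt_top.ne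


lemma avg_double (hn : n ≠ 0) (hf : LocallyIntegrable f volume)
    (hM : campanato1Norm n α f < ⊤) (c : EuclideanSpace ℝ (Fin n)) {ρ : ℝ} (hρ : 0 < ρ) :
    |ballAvg n f c ρ - ballAvg n f c (2 * ρ)| ≤
      2 ^ n * uvol n ^ (α / n) * (2 * ρ) ^ α * (campanato1Norm n α f).toReal := by
  set M := (campanato1Norm n α f).toReal
  set a := ballAvg n f c (2 * ρ)
  have h2ρ : 0 < 2 * ρ := by linarith
  have hfi : IntegrableOn (fun y => |f y - a|) (closedBall c (2*ρ)) volume :=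
    ((hf.integrableOn_isCompact (isCompact_closedBall c (2*ρ))).sub
      (integrableOn_const measure_closedBall_lt_top.ne)).abs
  have h1 := avg_sub_le hf c hρ a
  have h2 : ∫ y in closedBall c ρ, |f y - a| ≤ ∫ y in closedBall c (2*ρ), |f y - a| := by
    apply setIntegral_mono_set hfi
    · exact Filter.Eventually.of_forall fun y => abs_nonneg _
    · exact (closedBall_subset_closedBall (by linarith)).eventuallyLE
  have h3 := camp_int_le hM c h2ρ
  have hchain : |ballAvg n f c ρ - a| ≤
      (volume (closedBall c ρ)).toReal⁻¹ *
        ((volume (closedBall c (2*ρ))).toReal ^ (α / n) *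
          (volume (closedBall c (2*ρ))).toReal * M) := by
    refine h1.trans ?_
    have hV : 0 < (volume (closedBall c ρ)).toReal := vol_pos c hρ
    exact mul_le_mul_of_nonneg_left (h2.trans h3) (by positivity)
  refine hchain.trans (le_of_eq ?_)
  rw [vol_eq c hρ.le, vol_eq c h2ρ.le, pow_rpow_div hn h2ρ uvol_pos.le]
  have hω : (0:ℝ) < uvol n := uvol_pos
  have hρn : (0:ℝ) < ρ ^ n := by positivity
  rw [mul_pow]
  field_simp


lemma tele (hn : n ≠ 0) (hf : LocallyIntegrable f volume)
    (hM : campanato1Norm n α f < ⊤) (x₀ : EuclideanSpace ℝ (Fin n)) {r : ℝ} (hr : 0 < r)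
    (m : ℕ) :
    |ballAvg n f x₀ r - ballAvg n f x₀ (2 ^ m * r)| ≤
      ∑ j ∈ Finset.range m,
        2 ^ n * uvol n ^ (α / n) * (2 ^ (j+1) * r) ^ α * (campanato1Norm n α f).toReal := by
  induction m with
  | zero => simp
  | succ m ih =>
    have hstep := avg_double hn hf hM x₀ (ρ := 2 ^ m * r) (by positivity)
    have heq : 2 * (2 ^ m * r) = 2 ^ (m+1) * r := by ring
    rw [heq] at hstep
    calc |ballAvg n f x₀ r - ballAvg n f x₀ (2 ^ (m+1) * r)|
        ≤ |ballAvg n f x₀ r - ballAvg n f x₀ (2 ^ m * r)| +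
          |ballAvg n f x₀ (2 ^ m * r) - ballAvg n f x₀ (2 ^ (m+1) * r)| := abs_sub_le _ _ _
      _ ≤ _ := by
          rw [Finset.sum_range_succ]
          exact add_le_add ih hstep


lemma bigball (hn : n ≠ 0) (hf : LocallyIntegrable f volume)
    (hM : campanato1Norm n α f < ⊤) (x₀ : EuclideanSpace ℝ (Fin n)) {r : ℝ} (hr : 0 < r)
    (m : ℕ) :
    ∫ y in closedBall x₀ (2 ^ m * r), |f y - ballAvg n f x₀ r| ≤
      (volume (closedBall x₀ (2 ^ m * r))).toReal ^ (α / n) *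
        (volume (closedBall x₀ (2 ^ m * r))).toReal * (campanato1Norm n α f).toReal +
      (volume (closedBall x₀ (2 ^ m * r))).toReal *
        ∑ j ∈ Finset.range m,
          2 ^ n * uvol n ^ (α / n) * (2 ^ (j+1) * r) ^ α *
            (campanato1Norm n α f).toReal := by
  set M := (campanato1Norm n α f).toReal
  set a := ballAvg n f x₀ (2 ^ m * r)
  set b := ballAvg n f x₀ r
  have hmr : (0:ℝ) < 2 ^ m * r := by positivity
  have hfia : IntegrableOn (fun y => |f y - a|) (closedBall x₀ (2^m*r)) volume :=
    ((hf.integrableOn_isCompact (isCompact_closedBall _ _)).sub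
      (integrableOn_const measure_closedBall_lt_top.ne)).abs
  have hfib : IntegrableOn (fun y => |f y - b|) (closedBall x₀ (2^m*r)) volume :=
    ((hf.integrableOn_isCompact (isCompact_closedBall _ _)).sub
      (integrableOn_const measure_closedBall_lt_top.ne)).abs
  have h1 : ∫ y in closedBall x₀ (2^m*r), |f y - b| ≤
      ∫ y in closedBall x₀ (2^m*r), (|f y - a| + |a - b|) := by
    refine integral_mono hfib (hfia.add (integrableOn_const measure_closedBall_lt_top.ne)) ?_
    exact fun y => abs_sub_le _ _ _
  have h2 : ∫ y in closedBall x₀ (2^m*r), (|f y - a| + |a - b|) =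
      (∫ y in closedBall x₀ (2^m*r), |f y - a|) +
        (volume (closedBall x₀ (2^m*r))).toReal * |a - b| := by
    rw [integral_add hfia (integrableOn_const measure_closedBall_lt_top.ne),
      setIntegral_const, smul_eq_mul, measureReal_def]
  have h3 := camp_int_le hM x₀ hmr
  have h4 : |a - b| ≤ ∑ j ∈ Finset.range m, 2 ^ n * uvol n ^ (α/n) * (2^(j+1) * r) ^ α * M := by
    rw [abs_sub_comm]
    exact tele hn hf hM x₀ hr m
  refine (h1.trans_eq h2).trans (add_le_add h3 ?_)
  exact mul_le_mul_of_nonneg_left h4 ENNReal.toReal_nonneg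


end AuxHelpers

open Finset in
/-- annulus integral of r |f - f_B| / |x-y|^{n} (the case β = 1). -/
theorem stmt7 (n : ℕ) (hn : 1 ≤ n) (α : ℝ) :
    ∃ c > (0 : ℝ), ∀ f : EuclideanSpace ℝ (Fin n) → ℝ, LocallyIntegrable f volume →
      campanato1Norm n α f < ⊤ →
    ∀ (x₀ x : EuclideanSpace ℝ (Fin n)) (r t : ℝ), 0 < r → x ∈ closedBall x₀ r →
      8 * r < t →
      ((α < 0 →
        ∫⁻ y in {y : EuclideanSpace ℝ (Fin n) | 8 * r ≤ ‖x - y‖ ∧ ‖x - y‖ < t},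
            ENNReal.ofReal (r * |f y - ballAvg n f x₀ r| / ‖x - y‖ ^ (n : ℝ)) ≤
          ENNReal.ofReal (c * r ^ (1 + α) * Real.log (t / r) *
            (campanato1Norm n α f).toReal)) ∧
      (α = 0 →
        ∫⁻ y in {y : EuclideanSpace ℝ (Fin n) | 8 * r ≤ ‖x - y‖ ∧ ‖x - y‖ < t},
            ENNReal.ofReal (r * |f y - ballAvg n f x₀ r| / ‖x - y‖ ^ (n : ℝ)) ≤
          ENNReal.ofReal (c * r * Real.log (t / r) ^ 2 *
            (campanato1Norm n α f).toReal)) ∧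
      (0 < α →
        ∫⁻ y in {y : EuclideanSpace ℝ (Fin n) | 8 * r ≤ ‖x - y‖ ∧ ‖x - y‖ < t},
            ENNReal.ofReal (r * |f y - ballAvg n f x₀ r| / ‖x - y‖ ^ (n : ℝ)) ≤
          ENNReal.ofReal (c * r * t ^ α * Real.log (t / r) *
            (campanato1Norm n α f).toReal))) := by
  classical
  have hn0 : n ≠ 0 := Nat.one_le_iff_ne_zero.mp hn
  set ω := uvol n with hωdef
  have hω : 0 < ω := uvol_pos
  set D : ℝ := 2 ^ n * ω ^ (α / n) with hDdef
  have hDpos : 0 < D := by positivity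
  set C₂ : ℝ := 4 ^ n * ω with hC₂def
  have hC₂pos : 0 < C₂ := by positivity
  set A₀ : ℝ := ω ^ (α / n) + D * (1 - (2:ℝ) ^ α)⁻¹ with hA₀def
  set Az : ℝ := 1 + 2 ^ n with hAzdef
  have hAzpos : (0:ℝ) < Az := by positivity
  set Ap : ℝ := ω ^ (α / n) + D * ((2:ℝ) ^ α / ((2:ℝ) ^ α - 1)) with hApdef
  refine ⟨1 + 2 * C₂ * |A₀| + 9 * C₂ * Az + 2 * (4:ℝ) ^ α * C₂ * |Ap|, by positivity, ?_⟩
  set c : ℝ := 1 + 2 * C₂ * |A₀| + 9 * C₂ * Az + 2 * (4:ℝ) ^ α * C₂ * |Ap| with hcdef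
  intro f hf hM x₀ x r t hr hx ht
  set M := (campanato1Norm n α f).toReal with hMdef
  have hM0 : 0 ≤ M := ENNReal.toReal_nonneg
  set fB := ballAvg n f x₀ r with hfBdef
  set L := Real.log (t / r) with hLdef
  have h8r : (0:ℝ) < 8 * r := by linarith
  have ht0 : 0 < t := lt_trans h8r ht
  have htr8 : (8:ℝ) < t / r := (lt_div_iff₀ hr).2 (by linarith)
  have hlog2 : (0.6931471803 : ℝ) < Real.log 2 := Real.log_two_gt_d9
  have hL2 : 2 < L := by
    have h8 : Real.log 8 < L := Real.log_lt_log (by norm_num) htr8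
    have : Real.log 8 = 3 * Real.log 2 := by
      rw [show (8:ℝ) = 2 ^ 3 by norm_num, Real.log_pow]; push_cast; ring
    linarith
  have hL0 : 0 ≤ L := by linarith
  set K := Nat.floor (Real.logb 2 (t / (8 * r))) with hKdef
  have htq : 1 < t / (8 * r) := (one_lt_div h8r).2 ht
  have hlogb0 : 0 ≤ Real.logb 2 (t / (8 * r)) := Real.logb_nonneg one_lt_two htq.le
  have hKle : (K : ℝ) ≤ Real.logb 2 (t / (8 * r)) := Nat.floor_le hlogb0
  have h2K : (2:ℝ) ^ K ≤ t / (8 * r) := by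
    calc (2:ℝ) ^ K = (2:ℝ) ^ (K : ℝ) := (Real.rpow_natCast 2 K).symm
      _ ≤ (2:ℝ) ^ (Real.logb 2 (t / (8 * r))) :=
          Real.rpow_le_rpow_of_exponent_le one_le_two hKle
      _ = t / (8 * r) := Real.rpow_logb two_pos (by norm_num) (by positivity)
  have hK1 : (K : ℝ) + 1 ≤ 2 * L := by
    have h1 : Real.logb 2 (t / (8 * r)) = Real.log (t / (8 * r)) / Real.log 2 := rfl
    have h2 : Real.log (t / (8 * r)) ≤ L := by
      apply Real.log_le_log (by positivity)
      rw [div_le_div_iff₀ (by positivity) hr]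
      nlinarith
    have h3 : (K:ℝ) * Real.log 2 ≤ Real.log (t / (8*r)) := by
      rw [h1] at hKle
      calc (K:ℝ) * Real.log 2 ≤ (Real.log (t / (8*r)) / Real.log 2) * Real.log 2 := by
            apply mul_le_mul_of_nonneg_right hKle (by linarith)
        _ = Real.log (t / (8*r)) := by field_simp
    nlinarith [Nat.cast_nonneg (α := ℝ) K]
  -- annuli
  set A : ℕ → Set (EuclideanSpace ℝ (Fin n)) :=
    fun k => {y | 8 * r * 2 ^ k ≤ ‖x - y‖ ∧ ‖x - y‖ < 8 * r * 2 ^ (k+1)} with hAdef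
  have hcont : Continuous fun y : EuclideanSpace ℝ (Fin n) => ‖x - y‖ :=
    (continuous_const.sub continuous_id).norm
  have hAmeas : ∀ k, MeasurableSet (A k) := by
    intro k
    have : A k = (fun y : EuclideanSpace ℝ (Fin n) => ‖x - y‖) ⁻¹'
        (Set.Ico (8 * r * 2 ^ k) (8 * r * 2 ^ (k+1))) := by
      ext y; simp [hAdef, Set.mem_Ico]
    rw [this]
    exact hcont.measurable measurableSet_Ico
  have hAsub : ∀ k, A k ⊆ closedBall x₀ (2 ^ (k+5) * r) := by
    intro k y hy
    obtain ⟨_, hy2⟩ := hy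
    have hx' : dist x x₀ ≤ r := mem_closedBall.1 hx
    have e1 : (2:ℝ) ^ (k+1) = 2 ^ k * 2 := by rw [pow_succ]
    have e5 : (2:ℝ) ^ (k+5) = 2 ^ k * 32 := by rw [pow_add]; norm_num
    have hone : (1:ℝ) ≤ 2 ^ k := one_le_pow₀ one_le_two
    rw [mem_closedBall]
    calc dist y x₀ ≤ dist y x + dist x x₀ := dist_triangle y x x₀
      _ ≤ ‖x - y‖ + r := by
          rw [dist_eq_norm, norm_sub_rev]
          exact add_le_add_right hx' _
      _ ≤ 8 * r * 2 ^ (k+1) + r := by linarith [hy2.le]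
      _ ≤ 2 ^ (k+5) * r := by rw [e1, e5]; nlinarith
  have hcover : {y : EuclideanSpace ℝ (Fin n) | 8 * r ≤ ‖x - y‖ ∧ ‖x - y‖ < t} ⊆
      ⋃ k ∈ Finset.range (K+1), A k := by
    intro y hy
    obtain ⟨h1, h2⟩ := hy
    set d := ‖x - y‖ with hddef
    have hd0 : 0 < d := lt_of_lt_of_le h8r h1
    set q := d / (8 * r) with hqdef
    have hq1 : 1 ≤ q := (one_le_div h8r).2 h1
    have hq0 : 0 < q := by linarith
    have hqt : q < t / (8 * r) := by
      apply div_lt_div_of_pos_right h2 h8r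
    set k := Nat.floor (Real.logb 2 q) with hkdef
    have hlogq0 : 0 ≤ Real.logb 2 q := Real.logb_nonneg one_lt_two hq1
    have hk_le : (k : ℝ) ≤ Real.logb 2 q := Nat.floor_le hlogq0
    have hk_lt : Real.logb 2 q < (k : ℝ) + 1 := Nat.lt_floor_add_one _
    have h2k_le : (2:ℝ) ^ k ≤ q := by
      calc (2:ℝ) ^ k = (2:ℝ) ^ (k : ℝ) := (Real.rpow_natCast 2 k).symm
        _ ≤ (2:ℝ) ^ (Real.logb 2 q) := Real.rpow_le_rpow_of_exponent_le one_le_two hk_le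
        _ = q := Real.rpow_logb two_pos (by norm_num) hq0
    have hq_lt : q < (2:ℝ) ^ (k+1) := by
      calc q = (2:ℝ) ^ (Real.logb 2 q) := (Real.rpow_logb two_pos (by norm_num) hq0).symm
        _ < (2:ℝ) ^ ((k:ℝ) + 1) := Real.rpow_lt_rpow_of_exponent_lt one_lt_two hk_lt
        _ = (2:ℝ) ^ (k+1) := by rw [← Real.rpow_natCast 2 (k+1)]; push_cast; ring_nf
    have hkK : k ≤ K := by
      apply Nat.le_floor
      calc (k:ℝ) ≤ Real.logb 2 q := hk_le
        _ ≤ Real.logb 2 (t / (8*r)) := by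
            exact Real.logb_le_logb_of_le one_lt_two hq0 hqt.le
    refine Set.mem_biUnion (Finset.mem_range.2 (Nat.lt_succ_of_le hkK)) ?_
    constructor
    · calc 8 * r * 2 ^ k ≤ 8 * r * q := by nlinarith
        _ = d := by rw [hqdef]; field_simp
    · have := (div_lt_iff₀ h8r).1 hq_lt
      linarith [this]
  -- Ek and per-annulus bounds
  set Ek : ℕ → ℝ := fun k =>
    ω ^ (α / n) * ((2:ℝ) ^ (k+5)) ^ α +
      D * ∑ j ∈ Finset.range (k+5), ((2:ℝ) ^ α) ^ (j+1) with hEkdef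
  have hEk0 : ∀ k, 0 ≤ Ek k := by
    intro k
    have h1 : (0:ℝ) ≤ ∑ j ∈ Finset.range (k+5), ((2:ℝ) ^ α) ^ (j+1) :=
      Finset.sum_nonneg fun j _ => by positivity
    have h2 : (0:ℝ) ≤ ((2:ℝ) ^ (k+5) : ℝ) ^ α := Real.rpow_nonneg (by positivity) _
    have h3 : (0:ℝ) ≤ ω ^ (α/n) := Real.rpow_nonneg hω.le _
    simp only [hEkdef]
    have := hDpos.le
    positivity
  have hball_int : ∀ ρ : ℝ, IntegrableOn (fun y => |f y - fB|) (closedBall x₀ ρ) volume :=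
    fun ρ => ((hf.integrableOn_isCompact (isCompact_closedBall _ _)).sub
      (integrableOn_const measure_closedBall_lt_top.ne)).abs
  have hbigball : ∀ k : ℕ, ∫ y in closedBall x₀ (2 ^ (k+5) * r), |f y - fB| ≤
      (2 ^ (k+5) * r) ^ n * ω * (r ^ α * Ek k * M) := by
    intro k
    have hmr : (0:ℝ) < 2 ^ (k+5) * r := by positivity
    have hb := bigball hn0 hf hM x₀ hr (k+5)
    have hV : (volume (closedBall x₀ (2 ^ (k+5) * r))).toReal = (2 ^ (k+5) * r) ^ n * ω :=
      vol_eq x₀ hmr.le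
    refine hb.trans (le_of_eq ?_)
    rw [hV, pow_rpow_div hn0 hmr hω.le]
    have hsplit : ((2:ℝ) ^ (k+5) * r) ^ α = ((2:ℝ) ^ (k+5)) ^ α * r ^ α :=
      Real.mul_rpow (by positivity) hr.le
    have hsum : ∑ j ∈ Finset.range (k+5), 2 ^ n * ω ^ (α / n) * (2 ^ (j+1) * r) ^ α * M
        = (D * ∑ j ∈ Finset.range (k+5), ((2:ℝ) ^ α) ^ (j+1)) * (r ^ α * M) := by
      calc ∑ j ∈ Finset.range (k+5), 2 ^ n * ω ^ (α / n) * (2 ^ (j+1) * r) ^ α * M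
          = ∑ j ∈ Finset.range (k+5), (D * ((2:ℝ) ^ α) ^ (j+1)) * (r ^ α * M) := by
            refine Finset.sum_congr rfl fun j _ => ?_
            rw [Real.mul_rpow (by positivity) hr.le, two_pow_rpow, hDdef]
            ring
        _ = _ := by rw [← Finset.sum_mul, ← Finset.mul_sum]
    rw [hsum, hsplit]
    simp only [hEkdef]
    ring
  have hann : ∀ k : ℕ, (∫⁻ y in A k,
        ENNReal.ofReal (r * |f y - fB| / ‖x - y‖ ^ (n:ℝ))) ≤
      ENNReal.ofReal (C₂ * (r * r ^ α) * Ek k * M) := by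
    intro k
    set cst : ℝ := r / (8 * r * 2 ^ k) ^ n with hcstdef
    have hcst0 : 0 ≤ cst := by positivity
    have step1 : (∫⁻ y in A k, ENNReal.ofReal (r * |f y - fB| / ‖x - y‖ ^ (n:ℝ))) ≤
        ∫⁻ y in A k, ENNReal.ofReal (cst * |f y - fB|) := by
      refine setLIntegral_mono' (hAmeas k) fun y hy => ?_
      obtain ⟨hy1, _⟩ := hy
      have hd0 : (0:ℝ) < ‖x - y‖ := lt_of_lt_of_le (by positivity) hy1
      apply ENNReal.ofReal_le_ofReal
      rw [Real.rpow_natCast]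
      have hpow : (8 * r * 2 ^ k) ^ n ≤ ‖x - y‖ ^ n :=
        pow_le_pow_left₀ (by positivity) hy1 n
      have hrw : cst * |f y - fB| = r * |f y - fB| / (8 * r * 2 ^ k) ^ n := by
        rw [hcstdef]; ring
      rw [hrw]
      gcongr
    have step2 : (∫⁻ y in A k, ENNReal.ofReal (cst * |f y - fB|)) =
        ENNReal.ofReal cst * ∫⁻ y in A k, ENNReal.ofReal |f y - fB| := by
      simp_rw [ENNReal.ofReal_mul hcst0]
      exact lintegral_const_mul' _ _ ENNReal.ofReal_ne_top
    have step3 : (∫⁻ y in A k, ENNReal.ofReal |f y - fB|) ≤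
        ∫⁻ y in closedBall x₀ (2 ^ (k+5) * r), ENNReal.ofReal |f y - fB| :=
      lintegral_mono_set (hAsub k)
    have step4 : (∫⁻ y in closedBall x₀ (2 ^ (k+5) * r), ENNReal.ofReal |f y - fB|) =
        ENNReal.ofReal (∫ y in closedBall x₀ (2 ^ (k+5) * r), |f y - fB|) :=
      (ofReal_integral_eq_lintegral_ofReal (hball_int _)
        (Filter.Eventually.of_forall fun y => abs_nonneg _)).symm
    have hcstmul : cst * ((2 ^ (k+5) * r) ^ n * ω * (r ^ α * Ek k * M)) =
        C₂ * (r * r ^ α) * Ek k * M := by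
      have h1 : ((2:ℝ) ^ (k+5) * r) ^ n = 4 ^ n * (8 * r * 2 ^ k) ^ n := by
        rw [← mul_pow]
        congr 1
        rw [pow_add]
        ring
      have hXn : (0:ℝ) < (8 * r * 2 ^ k) ^ n := by positivity
      rw [hcstdef, h1, hC₂def]
      field_simp
    calc (∫⁻ y in A k, ENNReal.ofReal (r * |f y - fB| / ‖x - y‖ ^ (n:ℝ)))
        ≤ ∫⁻ y in A k, ENNReal.ofReal (cst * |f y - fB|) := step1
      _ = ENNReal.ofReal cst * ∫⁻ y in A k, ENNReal.ofReal |f y - fB| := step2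
      _ ≤ ENNReal.ofReal cst *
          ∫⁻ y in closedBall x₀ (2 ^ (k+5) * r), ENNReal.ofReal |f y - fB| :=
            mul_le_mul_right step3 _
      _ = ENNReal.ofReal cst *
          ENNReal.ofReal (∫ y in closedBall x₀ (2 ^ (k+5) * r), |f y - fB|) := by rw [step4]
      _ ≤ ENNReal.ofReal cst *
          ENNReal.ofReal ((2 ^ (k+5) * r) ^ n * ω * (r ^ α * Ek k * M)) :=
            mul_le_mul_right (ENNReal.ofReal_le_ofReal (hbigball k)) _
      _ = ENNReal.ofReal (cst * ((2 ^ (k+5) * r) ^ n * ω * (r ^ α * Ek k * M))) :=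
            (ENNReal.ofReal_mul hcst0).symm
      _ = ENNReal.ofReal (C₂ * (r * r ^ α) * Ek k * M) := by rw [hcstmul]
  have hterm0 : ∀ k : ℕ, 0 ≤ C₂ * (r * r ^ α) * Ek k * M := by
    intro k
    have h1 : (0:ℝ) ≤ r * r ^ α := by positivity
    exact mul_nonneg (mul_nonneg (mul_nonneg hC₂pos.le h1) (hEk0 k)) hM0
  have htotal : (∫⁻ y in {y : EuclideanSpace ℝ (Fin n) | 8 * r ≤ ‖x - y‖ ∧ ‖x - y‖ < t},
      ENNReal.ofReal (r * |f y - fB| / ‖x - y‖ ^ (n:ℝ))) ≤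
      ENNReal.ofReal ((C₂ * (r * r ^ α) * M) * ∑ k ∈ Finset.range (K+1), Ek k) := by
    calc (∫⁻ y in {y : EuclideanSpace ℝ (Fin n) | 8 * r ≤ ‖x - y‖ ∧ ‖x - y‖ < t},
        ENNReal.ofReal (r * |f y - fB| / ‖x - y‖ ^ (n:ℝ)))
        ≤ ∫⁻ y in ⋃ k ∈ Finset.range (K+1), A k,
            ENNReal.ofReal (r * |f y - fB| / ‖x - y‖ ^ (n:ℝ)) :=
          lintegral_mono_set hcover
      _ ≤ ∑ k ∈ Finset.range (K+1), ∫⁻ y in A k,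
            ENNReal.ofReal (r * |f y - fB| / ‖x - y‖ ^ (n:ℝ)) :=
          lintegral_finset_biUnion_le _ _ _ _
      _ ≤ ∑ k ∈ Finset.range (K+1), ENNReal.ofReal (C₂ * (r * r ^ α) * Ek k * M) :=
          Finset.sum_le_sum fun k _ => hann k
      _ = ENNReal.ofReal (∑ k ∈ Finset.range (K+1), C₂ * (r * r ^ α) * Ek k * M) :=
          (ENNReal.ofReal_sum_of_nonneg fun k _ => hterm0 k).symm
      _ = _ := by
          congr 1
          rw [Finset.mul_sum]
          exact Finset.sum_congr rfl fun k _ => by ring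
  have hLM0 : 0 ≤ L * M := mul_nonneg hL0 hM0
  refine ⟨fun hα => ?_, fun hα => ?_, fun hα => ?_⟩
  · -- α < 0
    refine htotal.trans (ENNReal.ofReal_le_ofReal ?_)
    have hEkb : ∀ k : ℕ, Ek k ≤ |A₀| := by
      intro k
      have h1 : ((2:ℝ) ^ (k+5)) ^ α ≤ 1 :=
        Real.rpow_le_one_of_one_le_of_nonpos (one_le_pow₀ one_le_two) hα.le
      have h2 : ∑ j ∈ Finset.range (k+5), ((2:ℝ)^α) ^ (j+1) ≤ (1 - (2:ℝ)^α)⁻¹ :=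
        gsum_lt_one (Real.rpow_nonneg (by norm_num) α)
          (Real.rpow_lt_one_of_one_lt_of_neg one_lt_two hα) (k+5)
      have h3 : (0:ℝ) ≤ ω ^ (α/n) := Real.rpow_nonneg hω.le _
      calc Ek k ≤ ω^(α/n) * 1 + D * (1 - (2:ℝ)^α)⁻¹ := by
            simp only [hEkdef]
            exact add_le_add (mul_le_mul_of_nonneg_left h1 h3)
              (mul_le_mul_of_nonneg_left h2 hDpos.le)
        _ = A₀ := by rw [hA₀def]; ring
        _ ≤ |A₀| := le_abs_self _
    have hsum : ∑ k ∈ Finset.range (K+1), Ek k ≤ 2 * L * |A₀| := by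
      calc ∑ k ∈ Finset.range (K+1), Ek k ≤ ∑ _k ∈ Finset.range (K+1), |A₀| :=
            Finset.sum_le_sum fun k _ => hEkb k
        _ = ((K:ℝ)+1) * |A₀| := by
            rw [Finset.sum_const, Finset.card_range, nsmul_eq_mul]
            push_cast; ring
        _ ≤ 2 * L * |A₀| := mul_le_mul_of_nonneg_right hK1 (abs_nonneg _)
    have hr1α : r ^ (1+α) = r * r ^ α := by
      rw [Real.rpow_add hr, Real.rpow_one]
    have hc1 : 2 * C₂ * |A₀| ≤ c := by
      rw [hcdef]
      have h4 : (0:ℝ) ≤ 9 * C₂ * Az := by positivity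
      have h5 : (0:ℝ) ≤ 2 * (4:ℝ)^α * C₂ * |Ap| := by positivity
      linarith
    have hfac : (0:ℝ) ≤ (r * r ^ α) * L * M := by
      refine mul_nonneg (mul_nonneg (by positivity) hL0) hM0
    calc (C₂ * (r * r^α) * M) * ∑ k ∈ Finset.range (K+1), Ek k
        ≤ (C₂ * (r * r^α) * M) * (2 * L * |A₀|) := by
          refine mul_le_mul_of_nonneg_left hsum ?_
          exact mul_nonneg (mul_nonneg hC₂pos.le (by positivity)) hM0
      _ = (2 * C₂ * |A₀|) * ((r * r^α) * L * M) := by ring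
      _ ≤ c * ((r * r^α) * L * M) := mul_le_mul_of_nonneg_right hc1 hfac
      _ = c * r ^ (1+α) * L * M := by rw [hr1α]; ring
  · -- α = 0
    subst hα
    refine htotal.trans (ENNReal.ofReal_le_ofReal ?_)
    have h2n : (0:ℝ) < 2 ^ n := by positivity
    have hD1 : D = 2 ^ n := by
      rw [hDdef, zero_div, Real.rpow_zero, mul_one]
    have hEk' : ∀ k : ℕ, Ek k = 1 + 2 ^ n * ((k:ℝ) + 5) := by
      intro k
      simp only [hEkdef]
      rw [hD1]
      simp only [zero_div, Real.rpow_zero, one_pow, mul_one, one_mul,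
        Finset.sum_const, Finset.card_range, nsmul_eq_mul]
      push_cast; ring
    have hEkb : ∀ k : ℕ, Ek k ≤ Az * ((k:ℝ) + 6) := by
      intro k
      rw [hEk', hAzdef]
      have : (0:ℝ) ≤ (k:ℝ) := Nat.cast_nonneg k
      nlinarith
    have hK6 : (K:ℝ) + 6 ≤ (9/2) * L := by linarith
    have hsum : ∑ k ∈ Finset.range (K+1), Ek k ≤ 9 * Az * L^2 := by
      calc ∑ k ∈ Finset.range (K+1), Ek k
          ≤ ∑ _k ∈ Finset.range (K+1), Az * ((K:ℝ) + 6) := by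
            refine Finset.sum_le_sum fun k hk => ?_
            have hkK : (k:ℝ) ≤ (K:ℝ) :=
              Nat.cast_le.2 (Nat.lt_succ_iff.1 (Finset.mem_range.1 hk))
            refine (hEkb k).trans (mul_le_mul_of_nonneg_left (by linarith) hAzpos.le)
        _ = ((K:ℝ)+1) * (Az * ((K:ℝ) + 6)) := by
            rw [Finset.sum_const, Finset.card_range, nsmul_eq_mul]
            push_cast; ring
        _ ≤ 9 * Az * L^2 := by
            have hKK : (0:ℝ) ≤ (K:ℝ) + 6 := by positivity
            have hprod : ((K:ℝ)+1) * ((K:ℝ)+6) ≤ (2*L) * ((9/2)*L) :=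
              mul_le_mul hK1 hK6 hKK (by linarith)
            nlinarith [hAzpos]
    have hc2 : 9 * C₂ * Az ≤ c := by
      rw [hcdef]
      have h4 : (0:ℝ) ≤ 2 * C₂ * |A₀| := by positivity
      have h5 : (0:ℝ) ≤ 2 * (4:ℝ)^(0:ℝ) * C₂ * |Ap| := by positivity
      linarith
    have hr0 : r ^ (0:ℝ) = 1 := Real.rpow_zero r
    have hfac : (0:ℝ) ≤ r * L^2 * M := by
      refine mul_nonneg (mul_nonneg hr.le (by positivity)) hM0
    calc (C₂ * (r * r ^ (0:ℝ)) * M) * ∑ k ∈ Finset.range (K+1), Ek k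
        ≤ (C₂ * (r * r ^ (0:ℝ)) * M) * (9 * Az * L^2) := by
          refine mul_le_mul_of_nonneg_left hsum ?_
          exact mul_nonneg (mul_nonneg hC₂pos.le (by positivity)) hM0
      _ = (9 * C₂ * Az) * (r * L^2 * M) := by rw [hr0]; ring
      _ ≤ c * (r * L^2 * M) := mul_le_mul_of_nonneg_right hc2 hfac
      _ = c * r * L^2 * M := by ring
  · -- 0 < α
    refine htotal.trans (ENNReal.ofReal_le_ofReal ?_)
    have h2α1 : (1:ℝ) < (2:ℝ)^α :=
      (Real.one_lt_rpow_iff_of_pos two_pos).2 (Or.inl ⟨one_lt_two, hα⟩)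
    have hG : (0:ℝ) < (2:ℝ)^α / ((2:ℝ)^α - 1) := by
      apply div_pos (by linarith) (by linarith)
    have hAp0 : 0 < Ap := by
      rw [hApdef]
      have : (0:ℝ) < ω ^ (α/n) := Real.rpow_pos_of_pos hω _
      nlinarith [hDpos]
    have htrpos : (0:ℝ) < t / r := by positivity
    have hEkb : ∀ k ∈ Finset.range (K+1), Ek k ≤ (4*(t/r))^α * |Ap| := by
      intro k hk
      have hkK : k ≤ K := Nat.lt_succ_iff.1 (Finset.mem_range.1 hk)
      have hbase : (2:ℝ) ^ (k+5) ≤ 4 * (t/r) := by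
        have e5 : (2:ℝ) ^ (k+5) = 32 * 2 ^ k := by rw [pow_add]; ring
        have h2k : (2:ℝ) ^ k ≤ 2 ^ K := pow_le_pow_right₀ one_le_two hkK
        have heq : 32 * (t / (8*r)) = 4 * (t/r) := by field_simp; ring
        calc (2:ℝ) ^ (k+5) = 32 * 2 ^ k := e5
          _ ≤ 32 * 2 ^ K := by linarith
          _ ≤ 32 * (t / (8*r)) := by linarith [h2K]
          _ = 4 * (t/r) := heq
      have hrp : ((2:ℝ) ^ (k+5)) ^ α ≤ (4*(t/r))^α :=
        Real.rpow_le_rpow (by positivity) hbase hα.le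
      have h2 : ∑ j ∈ Finset.range (k+5), ((2:ℝ)^α) ^ (j+1) ≤
          ((2:ℝ) ^ (k+5)) ^ α * ((2:ℝ)^α / ((2:ℝ)^α - 1)) := by
        rw [two_pow_rpow]
        exact gsum_gt_one h2α1 (k+5)
      have h3 : (0:ℝ) ≤ ω ^ (α/n) := Real.rpow_nonneg hω.le _
      calc Ek k ≤ ω^(α/n) * ((2:ℝ) ^ (k+5)) ^ α +
            D * (((2:ℝ) ^ (k+5)) ^ α * ((2:ℝ)^α / ((2:ℝ)^α - 1))) := by
            simp only [hEkdef]
            exact add_le_add le_rfl (mul_le_mul_of_nonneg_left h2 hDpos.le)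
        _ = ((2:ℝ) ^ (k+5)) ^ α * Ap := by rw [hApdef]; ring
        _ ≤ (4*(t/r))^α * |Ap| := by
            refine mul_le_mul hrp (le_abs_self _) hAp0.le ?_
            positivity
    have hsum : ∑ k ∈ Finset.range (K+1), Ek k ≤ 2 * L * ((4*(t/r))^α * |Ap|) := by
      calc ∑ k ∈ Finset.range (K+1), Ek k
          ≤ ∑ _k ∈ Finset.range (K+1), (4*(t/r))^α * |Ap| := Finset.sum_le_sum hEkb
        _ = ((K:ℝ)+1) * ((4*(t/r))^α * |Ap|) := by
            rw [Finset.sum_const, Finset.card_range, nsmul_eq_mul]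
            push_cast; ring
        _ ≤ 2 * L * ((4*(t/r))^α * |Ap|) := by
            refine mul_le_mul_of_nonneg_right hK1 ?_
            positivity
    have hmulrp : (4*(t/r))^α = (4:ℝ)^α * (t/r)^α :=
      Real.mul_rpow (by norm_num) htrpos.le
    have hrtα : r ^ α * (t/r) ^ α = t ^ α := by
      rw [← Real.mul_rpow hr.le htrpos.le]
      congr 1
      field_simp
    have hc3 : 2 * (4:ℝ)^α * C₂ * |Ap| ≤ c := by
      rw [hcdef]
      have h4 : (0:ℝ) ≤ 2 * C₂ * |A₀| := by positivity
      have h5 : (0:ℝ) ≤ 9 * C₂ * Az := by positivity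
      linarith
    have hfac : (0:ℝ) ≤ r * t^α * L * M := by
      refine mul_nonneg (mul_nonneg (by positivity) hL0) hM0
    calc (C₂ * (r * r^α) * M) * ∑ k ∈ Finset.range (K+1), Ek k
        ≤ (C₂ * (r * r^α) * M) * (2 * L * ((4*(t/r))^α * |Ap|)) := by
          refine mul_le_mul_of_nonneg_left hsum ?_
          exact mul_nonneg (mul_nonneg hC₂pos.le (by positivity)) hM0
      _ = (2 * (4:ℝ)^α * C₂ * |Ap|) * (r * (r^α * (t/r)^α) * L * M) := by
          rw [hmulrp]; ring
      _ = (2 * (4:ℝ)^α * C₂ * |Ap|) * (r * t^α * L * M) := by rw [hrtα]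
      _ ≤ c * (r * t^α * L * M) := mul_le_mul_of_nonneg_right hc3 hfac
      _ = c * r * t^α * L * M := by ring
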